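/- For every f ∈ Diff_0([0,1]) with f ≠ id, the series ∑_{n≥1} 1/Γ_n(f) converges. -/

import Mathlib

/-- `IsDiff0 f g` says that `f` is an orientation-preserving `C¹` diffeomorphism of the
interval `[0,1]` fixing the endpoints, with inverse `g`. -/
structure IsDiff0 (f g : ℝ → ℝ) : Prop where
  mapsTo : Set.MapsTo f (Set.Icc 0 1) (Set.Icc 0 1)
  mapsTo_inv : Set.MapsTo g (Set.Icc 0 1) (Set.Icc 0 1)
  left_inv : ∀ x ∈ Set.Icc (0:ℝ) 1, g (f x) = x
  right_inv : ∀ x ∈ Set.Icc (0:ℝ) 1, f (g x) = x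
  map_zero : f 0 = 0
  map_one : f 1 = 1
  contDiffOn : ContDiffOn ℝ 1 f (Set.Icc 0 1)
  contDiffOn_inv : ContDiffOn ℝ 1 g (Set.Icc 0 1)
  deriv_pos : ∀ x ∈ Set.Icc (0:ℝ) 1, 0 < derivWithin f (Set.Icc 0 1) x

/-- The growth sequence `Γ_n(f) = max (sup_x (fⁿ)'(x), sup_x (f⁻ⁿ)'(x))`, where `g = f⁻¹`. -/
noncomputable def Gamma (f g : ℝ → ℝ) (n : ℕ) : ℝ :=
  max (⨆ x : Set.Icc (0:ℝ) 1, derivWithin (f^[n]) (Set.Icc 0 1) (x : ℝ))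
      (⨆ x : Set.Icc (0:ℝ) 1, derivWithin (g^[n]) (Set.Icc 0 1) (x : ℝ))

lemma IsDiff0.symm {f g : ℝ → ℝ} (hf : IsDiff0 f g) : IsDiff0 g f := by
  have h01 : (0:ℝ) ∈ Set.Icc (0:ℝ) 1 := by constructor <;> norm_num
  have h11 : (1:ℝ) ∈ Set.Icc (0:ℝ) 1 := by constructor <;> norm_num
  have hU : UniqueDiffOn ℝ (Set.Icc (0:ℝ) 1) := uniqueDiffOn_Icc one_pos
  refine ⟨hf.mapsTo_inv, hf.mapsTo, hf.right_inv, hf.left_inv, ?_, ?_,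
    hf.contDiffOn_inv, hf.contDiffOn, ?_⟩
  · have := hf.left_inv 0 h01; rwa [hf.map_zero] at this
  · have := hf.left_inv 1 h11; rwa [hf.map_one] at this
  · intro y hy
    set x : ℝ := g y with hxdef
    have hxI : x ∈ Set.Icc (0:ℝ) 1 := hf.mapsTo_inv hy
    have hyx : y = f x := (hf.right_inv y hy).symm
    have hdf : HasDerivWithinAt f (derivWithin f (Set.Icc 0 1) x) (Set.Icc 0 1) x :=
      ((hf.contDiffOn.differentiableOn one_ne_zero) x hxI).hasDerivWithinAt
    have hdg : HasDerivWithinAt g (derivWithin g (Set.Icc 0 1) (f x)) (Set.Icc 0 1) (f x) :=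
      ((hf.contDiffOn_inv.differentiableOn one_ne_zero) (f x) (hf.mapsTo hxI)).hasDerivWithinAt
    have hcomp : HasDerivWithinAt (g ∘ f)
        (derivWithin g (Set.Icc 0 1) (f x) * derivWithin f (Set.Icc 0 1) x)
        (Set.Icc 0 1) x := HasDerivWithinAt.comp x hdg hdf hf.mapsTo
    have hid : HasDerivWithinAt (id : ℝ → ℝ)
        (derivWithin g (Set.Icc 0 1) (f x) * derivWithin f (Set.Icc 0 1) x)
        (Set.Icc 0 1) x := by
      refine hcomp.congr (fun z hz => ?_) ?_
      · exact (hf.left_inv z hz).symm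
      · exact (hf.left_inv x hxI).symm
    have h1 : derivWithin g (Set.Icc 0 1) (f x) * derivWithin f (Set.Icc 0 1) x = 1 := by
      have := hid.derivWithin (hU x hxI)
      rw [derivWithin_id x _ (hU x hxI)] at this
      linarith [this]
    have hfpos := hf.deriv_pos x hxI
    have : 0 < derivWithin g (Set.Icc 0 1) (f x) := by
      nlinarith
    rwa [hyx]

lemma key_summable (f g : ℝ → ℝ) (hf : IsDiff0 f g) (x : ℝ)
    (hx : x ∈ Set.Icc (0:ℝ) 1) (hlt : x < f x) :
    Summable (fun n : ℕ => 1 / Gamma f g (n + 1)) := by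
  set I : Set ℝ := Set.Icc (0:ℝ) 1 with hI
  have hU : UniqueDiffOn ℝ I := uniqueDiffOn_Icc one_pos
  -- f is strictly monotone on I
  have hmono : StrictMonoOn f I := by
    refine strictMonoOn_of_deriv_pos (convex_Icc 0 1) hf.contDiffOn.continuousOn ?_
    intro c hc
    rw [interior_Icc] at hc
    have hcI : c ∈ I := Set.Ioo_subset_Icc_self hc
    have := hf.deriv_pos c hcI
    rwa [derivWithin_of_mem_nhds (Icc_mem_nhds hc.1 hc.2)] at this
  -- orbit
  set a : ℕ → ℝ := fun n => f^[n] x with ha_def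
  have haI : ∀ n, a n ∈ I := fun n => hf.mapsTo.iterate n hx
  have hastep : ∀ n, a (n + 1) = f (a n) := by
    intro n; simp [ha_def, Function.iterate_succ_apply']
  have halt : ∀ n, a n < a (n + 1) := by
    intro n
    induction n with
    | zero => simpa [ha_def] using hlt
    | succ m ih =>
      rw [hastep m, hastep (m+1)]
      exact hmono (haI m) (haI (m+1)) ih
  set δ : ℕ → ℝ := fun n => a (n + 1) - a n with hδ_def
  have hδpos : ∀ n, 0 < δ n := fun n => sub_pos.mpr (halt n)
  -- iterates of g are C¹ on I
  have hgn_cd : ∀ n : ℕ, ContDiffOn ℝ 1 (g^[n]) I := by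
    intro n
    induction n with
    | zero => simpa using contDiffOn_id
    | succ m ih =>
      rw [Function.iterate_succ]
      exact ih.comp hf.contDiffOn_inv hf.mapsTo_inv
  -- g^[n] inverts f^[n] on I
  have hinv : ∀ n : ℕ, ∀ y ∈ I, g^[n] (f^[n] y) = y := by
    intro n
    induction n with
    | zero => intro y _; simp
    | succ m ih =>
      intro y hy
      rw [Function.iterate_succ_apply' f, Function.iterate_succ_apply g,
        hf.left_inv _ (hf.mapsTo.iterate m hy), ih y hy]
  -- key estimate via MVT
  have hkey : ∀ n : ℕ, δ 0 / δ n ≤ Gamma f g n ∧ 0 < Gamma f g n := by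
    intro n
    have hab : a n < a (n + 1) := halt n
    have hsub : Set.Icc (a n) (a (n + 1)) ⊆ I :=
      Set.Icc_subset_Icc (haI n).1 (haI (n+1)).2
    have hcont : ContinuousOn (g^[n]) (Set.Icc (a n) (a (n+1))) :=
      (hgn_cd n).continuousOn.mono hsub
    have hIoo : Set.Ioo (a n) (a (n+1)) ⊆ Set.Ioo (0:ℝ) 1 :=
      Set.Ioo_subset_Ioo (haI n).1 (haI (n+1)).2
    have hderiv : ∀ c ∈ Set.Ioo (a n) (a (n+1)), HasDerivAt (g^[n]) (deriv (g^[n]) c) c := by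
      intro c hc
      have hc01 : c ∈ Set.Ioo (0:ℝ) 1 := hIoo hc
      have hnhds : I ∈ nhds c := Icc_mem_nhds hc01.1 hc01.2
      exact (((hgn_cd n).differentiableOn one_ne_zero) c
        (Set.Ioo_subset_Icc_self hc01)).differentiableAt hnhds |>.hasDerivAt
    obtain ⟨c, hc, hceq⟩ := exists_hasDerivAt_eq_slope (g^[n]) (deriv (g^[n])) hab hcont hderiv
    have hc01 : c ∈ Set.Ioo (0:ℝ) 1 := hIoo hc
    have hcI : c ∈ I := Set.Ioo_subset_Icc_self hc01
    -- compute the slope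
    have hga1 : g^[n] (a (n+1)) = f x := by
      have : a (n + 1) = f^[n] (f x) := Function.iterate_succ_apply f n x
      rw [this, hinv n (f x) (hf.mapsTo hx)]
    have hga0 : g^[n] (a n) = x := hinv n x hx
    have hslope : deriv (g^[n]) c = δ 0 / δ n := by
      rw [hceq, hga1, hga0]
      have h0 : a 0 = x := rfl
      have h1 : a 1 = f x := by
        show f^[1] x = f x; rw [Function.iterate_one]
      have e0 : δ 0 = f x - x := by
        show a 1 - a 0 = f x - x; rw [h0, h1]
      have en : δ n = a (n + 1) - a n := rfl
      rw [e0, en]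
    have hdW : derivWithin (g^[n]) I c = δ 0 / δ n := by
      rw [derivWithin_of_mem_nhds (Icc_mem_nhds hc01.1 hc01.2), hslope]
    -- bound by sup
    have hbdd : BddAbove (Set.range fun y : I => derivWithin (g^[n]) I (y : ℝ)) := by
      have hcd : ContinuousOn (derivWithin (g^[n]) I) I :=
        (hgn_cd n).continuousOn_derivWithin hU le_rfl
      have := isCompact_Icc.bddAbove_image hcd
      have heq : (Set.range fun y : I => derivWithin (g^[n]) I (y : ℝ))
          = derivWithin (g^[n]) I '' I := by
        ext z; simp [Set.mem_image]
      rwa [heq]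
    have hle : δ 0 / δ n ≤ ⨆ y : I, derivWithin (g^[n]) I (y : ℝ) := by
      rw [← hdW]
      exact le_ciSup hbdd ⟨c, hcI⟩
    have hΓ : δ 0 / δ n ≤ Gamma f g n := hle.trans (le_max_right _ _)
    exact ⟨hΓ, lt_of_lt_of_le (div_pos (hδpos 0) (hδpos n)) hΓ⟩
  -- summability of δ
  have hδsum : Summable δ := by
    refine summable_of_sum_range_le (fun n => (hδpos n).le) (fun n => ?_) (c := 1)
    have : ∑ i ∈ Finset.range n, δ i = a n - a 0 := Finset.sum_range_sub a n
    rw [this]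
    have h1 : a n ≤ 1 := (haI n).2
    have h0 : (0:ℝ) ≤ a 0 := (haI 0).1
    linarith
  have hδsum' : Summable (fun n => δ (n + 1) / δ 0) :=
    (((summable_nat_add_iff 1).mpr hδsum)).div_const (δ 0)
  refine Summable.of_nonneg_of_le (fun n => ?_) (fun n => ?_) hδsum'
  · exact div_nonneg zero_le_one (hkey (n+1)).2.le
  · have h1 := (hkey (n+1)).1
    have h2 := (hkey (n+1)).2
    rw [div_le_div_iff₀ h2 (hδpos 0)]
    rw [div_le_iff₀ (hδpos (n+1))] at h1
    nlinarith [hδpos (n+1), hδpos 0]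

/-- For every `f ∈ Diff₀([0,1])` different from the identity, `∑_{n ≥ 1} 1/Γ_n(f) < ∞`. -/
theorem summable_inv_Gamma (f g : ℝ → ℝ) (hf : IsDiff0 f g)
    (hne : ∃ x ∈ Set.Icc (0:ℝ) 1, f x ≠ x) :
    Summable (fun n : ℕ => 1 / Gamma f g (n + 1)) := by
  obtain ⟨x, hx, hne⟩ := hne
  rcases lt_or_gt_of_ne hne with hlt | hgt
  · -- f x < x : use the inverse
    have hgf : IsDiff0 g f := hf.symm
    have hy : f x ∈ Set.Icc (0:ℝ) 1 := hf.mapsTo hx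
    have hylt : f x < g (f x) := by rw [hf.left_inv x hx]; exact hlt
    have hsum := key_summable g f hgf (f x) hy hylt
    have hGamma : ∀ n, Gamma g f n = Gamma f g n := fun n => max_comm _ _
    simpa [hGamma] using hsum
  · exact key_summable f g hf x hx hgt
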